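/- Let V, P, S be nonempty bounded subsets of the Euclidean space ℝ^d with S ⊆ V, and set X = V ∪ P and X_s = S ∪ P. Let E be a normed vector space and let F be a map from subsets of ℝ^d to E which is Lipschitz with respect to the Hausdorff distance with constant C ≥ 1, i.e. ‖F(A) − F(B)‖ ≤ C · d_H(A, B) for all nonempty bounded A, B ⊆ ℝ^d. Then ‖F(X) − F(X_s)‖ ≤ C · max{ min{ d_H(S,V), d_H(V,P) }, min{ d_H(S,V), d_H(S,P) } }. -/

import Mathlib

open Metric Bornology EMetric

lemma edist_union_le {α : Type*} [PseudoMetricSpace α] {V P S : Set α}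
    (hSV : S ⊆ V) :
    hausdorffEdist (V ∪ P) (S ∪ P) ≤ hausdorffEdist S V := by
  apply hausdorffEdist_le_of_infEdist
  · rintro x (hx | hx)
    · calc infEdist x (S ∪ P) ≤ infEdist x S := by
            exact infEDist_anti Set.subset_union_left
        _ ≤ hausdorffEdist V S := infEdist_le_hausdorffEdist_of_mem hx
        _ = hausdorffEdist S V := hausdorffEdist_comm
    · calc infEdist x (S ∪ P) ≤ infEdist x P := by
            exact infEDist_anti Set.subset_union_right
        _ = 0 := infEdist_zero_of_mem hx
        _ ≤ _ := zero_le
  · rintro x (hx | hx)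
    · calc infEdist x (V ∪ P) = 0 := infEdist_zero_of_mem (Or.inl (hSV hx))
        _ ≤ _ := zero_le
    · calc infEdist x (V ∪ P) = 0 := infEdist_zero_of_mem (Or.inr hx)
        _ ≤ _ := zero_le

lemma edist_union_le' {α : Type*} [PseudoMetricSpace α] {V P S : Set α}
    (hSV : S ⊆ V) :
    hausdorffEdist (V ∪ P) (S ∪ P) ≤ hausdorffEdist V P := by
  apply hausdorffEdist_le_of_infEdist
  · rintro x (hx | hx)
    · calc infEdist x (S ∪ P) ≤ infEdist x P := by
            exact infEDist_anti Set.subset_union_right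
        _ ≤ hausdorffEdist V P := infEdist_le_hausdorffEdist_of_mem hx
    · calc infEdist x (S ∪ P) ≤ infEdist x P := by
            exact infEDist_anti Set.subset_union_right
        _ = 0 := infEdist_zero_of_mem hx
        _ ≤ _ := zero_le
  · rintro x (hx | hx)
    · calc infEdist x (V ∪ P) = 0 := infEdist_zero_of_mem (Or.inl (hSV hx))
        _ ≤ _ := zero_le
    · calc infEdist x (V ∪ P) = 0 := infEdist_zero_of_mem (Or.inr hx)
        _ ≤ _ := zero_le

/-- An error bound for visual token pruning: if `F` is Lipschitz w.r.t. the
Hausdorff distance with constant `C ≥ 1`, then for `X = V ∪ P` and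
`X_s = S ∪ P` with `S ⊆ V`, the pruning error is bounded as stated. -/
theorem error_bound_for_visual_token_pruning
    {d : ℕ} {E : Type*} [NormedAddCommGroup E]
    (V P S : Set (EuclideanSpace ℝ (Fin d)))
    (hV : V.Nonempty) (hP : P.Nonempty) (hS : S.Nonempty)
    (hVb : IsBounded V) (hPb : IsBounded P) (hSb : IsBounded S)
    (hSV : S ⊆ V)
    (F : Set (EuclideanSpace ℝ (Fin d)) → E) (C : ℝ) (hC : 1 ≤ C)
    (hF : ∀ A B : Set (EuclideanSpace ℝ (Fin d)), A.Nonempty → B.Nonempty →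
      IsBounded A → IsBounded B → ‖F A - F B‖ ≤ C * hausdorffDist A B) :
    ‖F (V ∪ P) - F (S ∪ P)‖ ≤
      C * max (min (hausdorffDist S V) (hausdorffDist V P))
              (min (hausdorffDist S V) (hausdorffDist S P)) := by
  have hSVne : hausdorffEdist S V ≠ ⊤ :=
    hausdorffEdist_ne_top_of_nonempty_of_bounded hS hV hSb hVb
  have hVPne : hausdorffEdist V P ≠ ⊤ :=
    hausdorffEdist_ne_top_of_nonempty_of_bounded hV hP hVb hPb
  have h1 : hausdorffDist (V ∪ P) (S ∪ P) ≤ hausdorffDist S V :=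
    ENNReal.toReal_mono hSVne (edist_union_le hSV)
  have h2 : hausdorffDist (V ∪ P) (S ∪ P) ≤ hausdorffDist V P :=
    ENNReal.toReal_mono hVPne (edist_union_le' hSV)
  have hmain := hF (V ∪ P) (S ∪ P) (hV.mono Set.subset_union_left)
    (hS.mono Set.subset_union_left)
    (hVb.union hPb) (hSb.union hPb)
  have hC0 : (0:ℝ) ≤ C := le_trans zero_le_one hC
  calc ‖F (V ∪ P) - F (S ∪ P)‖ ≤ C * hausdorffDist (V ∪ P) (S ∪ P) := hmain
    _ ≤ C * max (min (hausdorffDist S V) (hausdorffDist V P))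
              (min (hausdorffDist S V) (hausdorffDist S P)) := by
        apply mul_le_mul_of_nonneg_left _ hC0
        exact le_max_of_le_left (le_min h1 h2)
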